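/- As x → ∞, the sum over primes p with p ≤ x/2 of 1/(p·log(x/p)) satisfies ∑_{p ≤ x/2} 1/(p·log(x/p)) = O(log log x / log x). -/

import Mathlib

open Filter Asymptotics Real Finset

attribute [local instance] Classical.propDecidable

/-- Real value of the zeta series `∑ 1/n^s`. -/
noncomputable def zetaR (s : ℝ) : ℝ := ∑' n : ℕ, 1 / (n : ℝ) ^ s

/-- The Mertens constant `B₁ = γ + ∑_p (log(1 - 1/p) + 1/p)`. -/
noncomputable def mertensB1 : ℝ :=
  Real.eulerMascheroniConstant +
    ∑' p : Nat.Primes, (Real.log (1 - 1 / ((p : ℕ) : ℝ)) + 1 / ((p : ℕ) : ℝ))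

/-- The constant `B₂ = B₁ + ∑_p 1/(p(p-1))`. -/
noncomputable def mertensB2 : ℝ :=
  mertensB1 + ∑' p : Nat.Primes, 1 / (((p : ℕ) : ℝ) * (((p : ℕ) : ℝ) - 1))

/-- `ω n`, the number of distinct prime factors of `n`. -/
def smallOmega (n : ℕ) : ℕ := n.primeFactors.card

/-- `Ω n`, the number of prime factors of `n` counted with multiplicity. -/
def bigOmega (n : ℕ) : ℕ := n.primeFactorsList.length

/-- `n` is `h`-free: every prime occurs with multiplicity at most `h - 1`. -/
def IsHFree (h n : ℕ) : Prop := ∀ p : ℕ, p.Prime → ¬ p ^ h ∣ n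

/-- `n` is `h`-full: every prime dividing `n` occurs with multiplicity at least `h`. -/
def IsHFull (h n : ℕ) : Prop := 0 < n ∧ ∀ p : ℕ, p.Prime → p ∣ n → p ^ h ∣ n

/-- `γ₀ₕ = ∏_p (1 + (p - p^{1/h})/(p²(p^{1/h} - 1)))`. -/
noncomputable def gamma0 (h : ℕ) : ℝ :=
  ∏' p : Nat.Primes,
    (1 + (((p:ℕ):ℝ) - ((p:ℕ):ℝ) ^ (1 / (h:ℝ))) /
      (((p:ℕ):ℝ) ^ 2 * (((p:ℕ):ℝ) ^ (1 / (h:ℝ)) - 1)))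

/-- `𝓛_h(r) = ∑_p 1/(p^{(r/h)-1}(p - p^{1-1/h} + 1))`. -/
noncomputable def Lh (h : ℕ) (r : ℝ) : ℝ :=
  ∑' p : Nat.Primes,
    1 / (((p:ℕ):ℝ) ^ (r / (h:ℝ) - 1) *
      (((p:ℕ):ℝ) - ((p:ℕ):ℝ) ^ (1 - 1 / (h:ℝ)) + 1))

/-- `C₁ = B₁ - ∑_p (p-1)/(p(p^h - 1))`. -/
noncomputable def C1 (h : ℕ) : ℝ :=
  mertensB1 - ∑' p : Nat.Primes, (((p:ℕ):ℝ) - 1) / (((p:ℕ):ℝ) * (((p:ℕ):ℝ) ^ h - 1))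

/-- `C₂ = C₁² + C₁ - ζ(2) - ∑_p ((p^{h-1}-1)/(p^h-1))²`. -/
noncomputable def C2 (h : ℕ) : ℝ :=
  C1 h ^ 2 + C1 h - zetaR 2 -
    ∑' p : Nat.Primes, ((((p:ℕ):ℝ) ^ (h - 1) - 1) / (((p:ℕ):ℝ) ^ h - 1)) ^ 2

/-- `C₃ = B₂ - ∑_p h/(p^h - 1)`. -/
noncomputable def C3 (h : ℕ) : ℝ :=
  mertensB2 - ∑' p : Nat.Primes, (h : ℝ) / (((p:ℕ):ℝ) ^ h - 1)

/-- `C₄ = C₃² + C₃ - ζ(2) - ∑_p ((p^h - hp + h - 1)/((p-1)(p^h-1)))²`. -/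
noncomputable def C4 (h : ℕ) : ℝ :=
  C3 h ^ 2 + C3 h - zetaR 2 -
    ∑' p : Nat.Primes,
      ((((p:ℕ):ℝ) ^ h - (h:ℝ) * ((p:ℕ):ℝ) + (h:ℝ) - 1) /
        ((((p:ℕ):ℝ) - 1) * (((p:ℕ):ℝ) ^ h - 1))) ^ 2

/-- `D₁ = B₁ - log h + 𝓛_h(h+1) - 𝓛_h(2h)`. -/
noncomputable def D1 (h : ℕ) : ℝ :=
  mertensB1 - Real.log h + Lh h ((h:ℝ) + 1) - Lh h (2 * (h:ℝ))

/-- `D₂ = D₁² + D₁ - ζ(2) - ∑_p (1/(p - p^{1-1/h} + 1))²`. -/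
noncomputable def D2 (h : ℕ) : ℝ :=
  D1 h ^ 2 + D1 h - zetaR 2 -
    ∑' p : Nat.Primes,
      (1 / (((p:ℕ):ℝ) - ((p:ℕ):ℝ) ^ (1 - 1 / (h:ℝ)) + 1)) ^ 2

/-- `B₃ = h(B₂ - log h) + ∑_p ((h+1)p^{1+1/h} - hp - 2hp^{2/h} + (2h-1)p^{1/h}) /
      ((p-1)(p^{1/h}-1)(p^{1+1/h}+p^{1/h}-p))`. -/
noncomputable def B3 (h : ℕ) : ℝ :=
  (h : ℝ) * (mertensB2 - Real.log h) +
    ∑' p : Nat.Primes,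
      (((h:ℝ) + 1) * ((p:ℕ):ℝ) ^ (1 + 1 / (h:ℝ)) - (h:ℝ) * ((p:ℕ):ℝ) -
          2 * (h:ℝ) * ((p:ℕ):ℝ) ^ (2 / (h:ℝ)) +
          (2 * (h:ℝ) - 1) * ((p:ℕ):ℝ) ^ (1 / (h:ℝ))) /
        ((((p:ℕ):ℝ) - 1) * (((p:ℕ):ℝ) ^ (1 / (h:ℝ)) - 1) *
          (((p:ℕ):ℝ) ^ (1 + 1 / (h:ℝ)) + ((p:ℕ):ℝ) ^ (1 / (h:ℝ)) - ((p:ℕ):ℝ)))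

/-- `B₄ = B₃² + B₃ - h²ζ(2) - ∑_p ((h(p^{1/h}-1)+1)/((p^{1/h}-1)(p-p^{1-1/h}+1)))²`. -/
noncomputable def B4 (h : ℕ) : ℝ :=
  B3 h ^ 2 + B3 h - (h:ℝ) ^ 2 * zetaR 2 -
    ∑' p : Nat.Primes,
      (((h:ℝ) * (((p:ℕ):ℝ) ^ (1 / (h:ℝ)) - 1) + 1) /
        ((((p:ℕ):ℝ) ^ (1 / (h:ℝ)) - 1) *
          (((p:ℕ):ℝ) - ((p:ℕ):ℝ) ^ (1 - 1 / (h:ℝ)) + 1))) ^ 2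

theorem aux_cheb_theta (y : ℝ) (hy : 0 ≤ y) :
    ∑ p ∈ (Finset.Icc 1 ⌊y⌋₊).filter Nat.Prime, Real.log p ≤ y * Real.log 4 := by
  have h1 : (Finset.Icc 1 ⌊y⌋₊).filter Nat.Prime
      = (Finset.range (⌊y⌋₊ + 1)).filter Nat.Prime := by
    ext p
    simp only [Finset.mem_filter, Finset.mem_Icc, Finset.mem_range, Nat.lt_succ_iff]
    exact ⟨fun ⟨⟨_, h2⟩, hp⟩ => ⟨h2, hp⟩, fun ⟨h2, hp⟩ => ⟨⟨hp.one_lt.le, h2⟩, hp⟩⟩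
  rw [h1]
  have h2 : ∑ p ∈ (Finset.range (⌊y⌋₊ + 1)).filter Nat.Prime, Real.log p
      = Real.log (primorial ⌊y⌋₊) := by
    rw [primorial]
    push_cast
    rw [Real.log_prod]
    intro p hp
    simp only [Finset.mem_filter] at hp
    exact_mod_cast hp.2.pos.ne'
  rw [h2]
  calc Real.log (primorial ⌊y⌋₊) ≤ Real.log ((4:ℝ) ^ ⌊y⌋₊) := by
        apply Real.log_le_log (by exact_mod_cast Nat.pos_of_ne_zero (primorial_pos ⌊y⌋₊).ne')
        exact_mod_cast primorial_le_4_pow ⌊y⌋₊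
    _ = ⌊y⌋₊ * Real.log 4 := by rw [Real.log_pow]
    _ ≤ y * Real.log 4 := by
        apply mul_le_mul_of_nonneg_right (Nat.floor_le hy)
        positivity

theorem aux_harm_sum (n : ℕ) (hn : 1 ≤ n) :
    ∑ j ∈ Finset.Icc 1 n, 1/((j:ℝ)*((n:ℝ)+1-j)) ≤ 2*(1+Real.log n)/((n:ℝ)+1) := by
  have hrefl : ∑ j ∈ Finset.Icc 1 n, (1:ℝ)/((n:ℝ)+1-j) = ∑ j ∈ Finset.Icc 1 n, (1:ℝ)/j := by
    refine Finset.sum_nbij' (fun j => n+1-j) (fun j => n+1-j) ?_ ?_ ?_ ?_ ?_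
    · intro a ha; simp only [Finset.mem_Icc] at *; omega
    · intro a ha; simp only [Finset.mem_Icc] at *; omega
    · intro a ha; simp only [Finset.mem_Icc] at *; omega
    · intro a ha; simp only [Finset.mem_Icc] at *; omega
    · intro a ha
      simp only [Finset.mem_Icc] at ha
      have : ((n + 1 - a : ℕ) : ℝ) = (n:ℝ) + 1 - a := by
        have := ha.2; push_cast [Nat.cast_sub (by omega : a ≤ n+1)]; ring
      rw [this]
  have hsplit : ∀ j ∈ Finset.Icc 1 n,
      1/((j:ℝ)*((n:ℝ)+1-j)) = (1/((n:ℝ)+1)) * (1/(j:ℝ) + 1/((n:ℝ)+1-j)) := by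
    intro j hj
    simp only [Finset.mem_Icc] at hj
    have h1 : (0:ℝ) < j := by exact_mod_cast hj.1
    have h2 : (0:ℝ) < (n:ℝ)+1-j := by
      have : (j:ℝ) ≤ n := by exact_mod_cast hj.2
      linarith
    field_simp
    ring
  rw [Finset.sum_congr rfl hsplit, ← Finset.mul_sum, Finset.sum_add_distrib, hrefl]
  have hH : ∑ j ∈ Finset.Icc 1 n, (1:ℝ)/j ≤ 1 + Real.log n := by
    have := harmonic_le_one_add_log n
    rw [harmonic_eq_sum_Icc] at this
    push_cast at this
    simpa using this
  have hn1 : (0:ℝ) < (n:ℝ)+1 := by positivity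
  calc (1/((n:ℝ)+1)) * (∑ j ∈ Finset.Icc 1 n, (1:ℝ)/j + ∑ j ∈ Finset.Icc 1 n, (1:ℝ)/j)
      = 2 * (∑ j ∈ Finset.Icc 1 n, (1:ℝ)/j) / ((n:ℝ)+1) := by ring
    _ ≤ 2*(1+Real.log n)/((n:ℝ)+1) := by gcongr

set_option maxHeartbeats 1000000 in
theorem sum_one_div_p_log_x_div_p :
    (fun x : ℝ =>
      ∑ p ∈ (Finset.Icc 1 ⌊x / 2⌋₊).filter Nat.Prime,
        1 / ((p : ℝ) * Real.log (x / (p : ℝ))))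
      =O[atTop] fun x : ℝ => Real.log (Real.log x) / Real.log x := by
  rw [Asymptotics.isBigO_iff]
  refine ⟨36 * Real.log 4 / Real.log 2, ?_⟩
  filter_upwards [Filter.eventually_ge_atTop (16:ℝ)] with x hx
  have hx0 : (0:ℝ) < x := by linarith
  set c := Real.log 2 with hc
  set L := Real.log x with hL
  have hc0 : 0 < c := Real.log_pos one_lt_two
  have hcd : 0.6931471803 < c := Real.log_two_gt_d9
  have hcd' : c < 0.6931471808 := Real.log_two_lt_d9
  have hL4c : 4*c ≤ L := by
    have h16 : Real.log 16 ≤ L := Real.log_le_log (by norm_num) hx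
    have : Real.log 16 = 4*c := by
      rw [show (16:ℝ) = 2^4 by norm_num, Real.log_pow]; push_cast; ring
    linarith
  have hL0 : 0 < L := by linarith
  have hlogL1 : 1 ≤ Real.log L := by
    rw [Real.le_log_iff_exp_le hL0]
    have := Real.exp_one_lt_d9
    calc Real.exp 1 ≤ 2.7182818286 := this.le
      _ ≤ 4*c := by linarith
      _ ≤ L := hL4c
  have hlogc : -1 ≤ Real.log c := by
    rw [Real.le_log_iff_exp_le hc0]
    have he : Real.exp (-1) = (Real.exp 1)⁻¹ := by rw [Real.exp_neg]
    have h1 : (2.7182818283:ℝ) < Real.exp 1 := Real.exp_one_gt_d9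
    have : (Real.exp 1)⁻¹ ≤ (2.7182818283:ℝ)⁻¹ := by
      apply inv_anti₀ (by norm_num) h1.le
    rw [he]
    calc (Real.exp 1)⁻¹ ≤ (2.7182818283:ℝ)⁻¹ := this
      _ ≤ c := by rw [show ((2.7182818283:ℝ))⁻¹ = 1/2.7182818283 by ring]; nlinarith
  set n := ⌊L/c⌋₊ with hn
  have hn4 : 4 ≤ n := by
    apply Nat.le_floor
    rw [le_div_iff₀ hc0]
    push_cast; linarith
  have hn1 : 1 ≤ n := by omega
  have hnL : (n:ℝ) ≤ L/c := Nat.floor_le (by positivity)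
  have hLn : L/c < (n:ℝ)+1 := by
    have := Nat.lt_floor_add_one (L/c); push_cast at this ⊢; linarith
  set m : ℕ → ℝ := fun j => max c (L - ((j:ℝ)+1)*c) with hm
  set P := (Finset.Icc 1 ⌊x / 2⌋₊).filter Nat.Prime with hP
  set g : ℕ → ℕ := fun p => ⌊(L - Real.log p)/c⌋₊ with hg
  -- basic facts for p ∈ P
  have hPfact : ∀ p ∈ P, (2:ℝ) ≤ (p:ℝ) ∧ Real.log p ≤ L - c ∧ c ≤ Real.log p := by
    intro p hp
    simp only [hP, Finset.mem_filter, Finset.mem_Icc] at hp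
    have hp2 : (2:ℝ) ≤ (p:ℝ) := by exact_mod_cast hp.2.two_le
    have hpx : (p:ℝ) ≤ x/2 := by
      calc (p:ℝ) ≤ (⌊x/2⌋₊:ℝ) := by exact_mod_cast hp.1.2
        _ ≤ x/2 := Nat.floor_le (by positivity)
    refine ⟨hp2, ?_, ?_⟩
    · have := Real.log_le_log (by linarith) hpx
      rwa [Real.log_div hx0.ne' (by norm_num)] at this
    · exact Real.log_le_log (by norm_num) hp2
  have hmem : ∀ p ∈ P, g p ∈ Finset.Icc 1 n := by
    intro p hp
    obtain ⟨hp2, hple, hpge⟩ := hPfact p hp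
    simp only [Finset.mem_Icc]
    constructor
    · apply Nat.le_floor
      rw [Nat.cast_one, le_div_iff₀ hc0]
      linarith
    · apply Nat.floor_le_floor
      gcongr
      linarith
  -- per-block facts
  have hblock : ∀ j ∈ Finset.Icc 1 n,
      ∑ p ∈ P.filter (fun p => g p = j), 1 / ((p : ℝ) * Real.log (x / (p : ℝ)))
        ≤ 2*Real.log 4/(c*(j:ℝ)*m j) := by
    intro j hj
    simp only [Finset.mem_Icc] at hj
    have hj0 : (0:ℝ) < (j:ℝ) := by exact_mod_cast hj.1
    set Q := P.filter (fun p => g p = j) with hQ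
    set z := Real.exp (L - ((j:ℝ)+1)*c) with hz
    set y := Real.exp (L - (j:ℝ)*c) with hy
    have hz0 : (0:ℝ) < z := Real.exp_pos _
    have hy0 : (0:ℝ) < y := Real.exp_pos _
    have hmj0 : 0 < m j := lt_max_of_lt_left hc0
    have hyz : y = 2*z := by
      rw [hy, hz, show L - (j:ℝ)*c = (L - ((j:ℝ)+1)*c) + c by ring, Real.exp_add,
        hc, Real.exp_log two_pos]
      ring
    -- facts for p in Q
    have hQfact : ∀ p ∈ Q, z ≤ (p:ℝ) ∧ (p:ℝ) ≤ y ∧ m j ≤ Real.log p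
        ∧ (j:ℝ)*c ≤ Real.log (x / (p:ℝ)) := by
      intro p hp
      rw [hQ, Finset.mem_filter] at hp
      obtain ⟨hpP, hpg⟩ := hp
      obtain ⟨hp2, hple, hpge⟩ := hPfact p hpP
      have hp0 : (0:ℝ) < (p:ℝ) := by linarith
      have h0 : 0 ≤ (L - Real.log p)/c := div_nonneg (by linarith) hc0.le
      have hfl := (Nat.floor_eq_iff h0).mp hpg
      have hlow : (j:ℝ)*c ≤ L - Real.log p := (le_div_iff₀ hc0).mp hfl.1
      have hhigh : L - Real.log p < ((j:ℝ)+1)*c := by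
        have := (div_lt_iff₀ hc0).mp hfl.2
        push_cast at this ⊢; linarith
      have hlogdiv : Real.log (x / (p:ℝ)) = L - Real.log p :=
        Real.log_div hx0.ne' hp0.ne'
      refine ⟨?_, ?_, ?_, ?_⟩
      · calc z ≤ Real.exp (Real.log p) := Real.exp_le_exp.mpr (by linarith)
          _ = (p:ℝ) := Real.exp_log hp0
      · calc (p:ℝ) = Real.exp (Real.log p) := (Real.exp_log hp0).symm
          _ ≤ y := Real.exp_le_exp.mpr (by linarith)
      · exact max_le hpge (by linarith)
      · rw [hlogdiv]; exact hlow
    -- cardinality bound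
    have hcard : (Q.card : ℝ) * m j ≤ y * Real.log 4 := by
      calc (Q.card:ℝ) * m j = Q.card • m j := by rw [nsmul_eq_mul]
        _ ≤ ∑ p ∈ Q, Real.log p :=
            Finset.card_nsmul_le_sum Q _ _ (fun p hp => (hQfact p hp).2.2.1)
        _ ≤ ∑ p ∈ (Finset.Icc 1 ⌊y⌋₊).filter Nat.Prime, Real.log p := by
            apply Finset.sum_le_sum_of_subset_of_nonneg
            · intro p hp
              have h2 := (hQfact p hp).2.1
              rw [hQ, Finset.mem_filter] at hp
              rw [hP, Finset.mem_filter, Finset.mem_Icc] at hp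
              rw [Finset.mem_filter, Finset.mem_Icc]
              exact ⟨⟨hp.1.1.1, Nat.le_floor h2⟩, hp.1.2⟩
            · intro p hp _
              rw [Finset.mem_filter] at hp
              apply Real.log_nonneg
              exact_mod_cast hp.2.one_lt.le
        _ ≤ y * Real.log 4 := aux_cheb_theta y hy0.le
    -- sum over the block
    have hsum : ∑ p ∈ Q, 1 / ((p : ℝ) * Real.log (x / (p : ℝ)))
        ≤ (Q.card : ℝ) * (1/(z * ((j:ℝ)*c))) := by
      calc ∑ p ∈ Q, 1 / ((p : ℝ) * Real.log (x / (p : ℝ)))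
          ≤ Q.card • (1/(z * ((j:ℝ)*c))) := by
            apply Finset.sum_le_card_nsmul
            intro p hp
            obtain ⟨h1, h2, h3, h4⟩ := hQfact p hp
            apply one_div_le_one_div_of_le (by positivity)
            apply mul_le_mul h1 h4 (by positivity) (by linarith)
        _ = (Q.card : ℝ) * (1/(z * ((j:ℝ)*c))) := by rw [nsmul_eq_mul]
    have hcard' : (Q.card : ℝ) ≤ y * Real.log 4 / m j :=
      (le_div_iff₀ hmj0).mpr hcard
    calc ∑ p ∈ Q, 1 / ((p : ℝ) * Real.log (x / (p : ℝ)))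
        ≤ (Q.card : ℝ) * (1/(z * ((j:ℝ)*c))) := hsum
      _ ≤ (y * Real.log 4 / m j) * (1/(z * ((j:ℝ)*c))) := by
          apply mul_le_mul_of_nonneg_right hcard' (by positivity)
      _ = 2*Real.log 4/(c*(j:ℝ)*m j) := by
          rw [hyz]
          field_simp
  -- assemble
  have hlog4 : (0:ℝ) ≤ Real.log 4 := Real.log_nonneg (by norm_num)
  have hm3 : ∀ j ∈ Finset.Icc 1 n, (c/3)*((n:ℝ)+1-(j:ℝ)) ≤ m j := by
    intro j hj
    simp only [Finset.mem_Icc] at hj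
    have hj1 : (1:ℝ) ≤ (j:ℝ) := by exact_mod_cast hj.1
    have hjn : (j:ℝ) ≤ (n:ℝ) := by exact_mod_cast hj.2
    by_cases hcase : (n:ℝ)+1-(j:ℝ) ≤ 3
    · calc (c/3)*((n:ℝ)+1-(j:ℝ)) ≤ c := by nlinarith
        _ ≤ m j := le_max_left _ _
    · push_neg at hcase
      have hLnc : (n:ℝ)*c ≤ L := (le_div_iff₀ hc0).mp hnL
      calc (c/3)*((n:ℝ)+1-(j:ℝ)) ≤ ((n:ℝ)-(j:ℝ)-1)*c := by nlinarith
        _ ≤ L - ((j:ℝ)+1)*c := by nlinarith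
        _ ≤ m j := le_max_right _ _
  have hstep : ∀ j ∈ Finset.Icc 1 n, 2*Real.log 4/(c*(j:ℝ)*m j)
      ≤ (6*Real.log 4/c^2) * (1/((j:ℝ)*((n:ℝ)+1-(j:ℝ)))) := by
    intro j hj
    have hm3j := hm3 j hj
    simp only [Finset.mem_Icc] at hj
    have hj0 : (0:ℝ) < (j:ℝ) := by exact_mod_cast hj.1
    have hjn : (j:ℝ) ≤ (n:ℝ) := by exact_mod_cast hj.2
    have hnj : (0:ℝ) < (n:ℝ)+1-(j:ℝ) := by linarith
    have hmj0 : 0 < m j := lt_max_of_lt_left hc0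
    have heq : (6*Real.log 4/c^2) * (1/((j:ℝ)*((n:ℝ)+1-(j:ℝ))))
        = 2*Real.log 4/(c*(j:ℝ)*((c/3)*((n:ℝ)+1-(j:ℝ)))) := by
      field_simp
      ring
    rw [heq]
    have hd1 : 0 < c*(j:ℝ)*((c/3)*((n:ℝ)+1-(j:ℝ))) :=
      mul_pos (mul_pos hc0 hj0) (mul_pos (by positivity) hnj)
    have hd2 : 0 < c*(j:ℝ)*m j := mul_pos (mul_pos hc0 hj0) hmj0
    have hle : c*(j:ℝ)*((c/3)*((n:ℝ)+1-(j:ℝ))) ≤ c*(j:ℝ)*m j :=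
      mul_le_mul_of_nonneg_left hm3j (by positivity)
    exact div_le_div_of_nonneg_left (by positivity) hd1 hle
  have hSnn : 0 ≤ ∑ p ∈ P, 1 / ((p : ℝ) * Real.log (x / (p : ℝ))) := by
    apply Finset.sum_nonneg
    intro p hp
    obtain ⟨hp2, hple, hpge⟩ := hPfact p hp
    have hp0 : (0:ℝ) < (p:ℝ) := by linarith
    have hlog : 0 ≤ Real.log (x/(p:ℝ)) := by
      rw [Real.log_div hx0.ne' hp0.ne']
      linarith
    exact div_nonneg zero_le_one (mul_nonneg hp0.le hlog)
  have hn0 : (0:ℝ) < (n:ℝ) := by exact_mod_cast (by omega : 0 < n)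
  have hlogn : Real.log n ≤ Real.log L + 1 := by
    calc Real.log n ≤ Real.log (L/c) := Real.log_le_log hn0 hnL
      _ = Real.log L - Real.log c := Real.log_div hL0.ne' hc0.ne'
      _ ≤ Real.log L + 1 := by linarith
  have h1n : 1/((n:ℝ)+1) ≤ c/L := by
    rw [div_le_div_iff₀ (by positivity) hL0]
    have : L < ((n:ℝ)+1)*c := by
      have := (div_lt_iff₀ hc0).mp hLn
      linarith
    linarith
  have htot : ∑ p ∈ P, 1 / ((p : ℝ) * Real.log (x / (p : ℝ)))
      ≤ 36*Real.log 4/c * (Real.log L / L) := by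
    calc ∑ p ∈ P, 1 / ((p : ℝ) * Real.log (x / (p : ℝ)))
        = ∑ j ∈ Finset.Icc 1 n, ∑ p ∈ P.filter (fun p => g p = j),
            1 / ((p : ℝ) * Real.log (x / (p : ℝ))) :=
          (Finset.sum_fiberwise_of_maps_to hmem _).symm
      _ ≤ ∑ j ∈ Finset.Icc 1 n, 2*Real.log 4/(c*(j:ℝ)*m j) := Finset.sum_le_sum hblock
      _ ≤ ∑ j ∈ Finset.Icc 1 n, (6*Real.log 4/c^2) * (1/((j:ℝ)*((n:ℝ)+1-(j:ℝ)))) :=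
          Finset.sum_le_sum hstep
      _ = (6*Real.log 4/c^2) * ∑ j ∈ Finset.Icc 1 n, 1/((j:ℝ)*((n:ℝ)+1-(j:ℝ))) := by
          rw [Finset.mul_sum]
      _ ≤ (6*Real.log 4/c^2) * (2*(1+Real.log n)/((n:ℝ)+1)) := by
          apply mul_le_mul_of_nonneg_left (aux_harm_sum n hn1) (by positivity)
      _ ≤ (6*Real.log 4/c^2) * (2*(3*Real.log L)*(c/L)) := by
          apply mul_le_mul_of_nonneg_left ?_ (by positivity)
          calc 2*(1+Real.log n)/((n:ℝ)+1) = (2*(1+Real.log n))*(1/((n:ℝ)+1)) := by ring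
            _ ≤ (2*(3*Real.log L))*(c/L) := by
                apply mul_le_mul (by linarith) h1n (by positivity) (by linarith)
      _ = 36*Real.log 4/c * (Real.log L / L) := by
          field_simp
          ring
  rw [Real.norm_eq_abs, Real.norm_eq_abs, abs_of_nonneg hSnn,
    abs_of_nonneg (div_nonneg (by linarith) hL0.le)]
  exact htot
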